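/- An automaton M = ⟨L, s₀⟩ has ε-differential noninterference if and only if for all input sequences i⃗₁, i⃗₂ ∈ I* with Δ(i⃗₁,i⃗₂) ≤ 1 and all single observable sequences e⃗ ∈ E*: Pr[⟦M⟧(i⃗₁)↾E ⊒ e⃗] ≤ e^ε · Pr[⟦M⟧(i⃗₂)↾E ⊒ e⃗]. -/
import Mathlib


open scoped Classical

/-- Restriction of a sequence of actions to a subset `E` of actions. -/
noncomputable def restrictList {A : Type*} (E : Set A) : List A → List A
  | [] => []
  | a :: l => if a ∈ E then a :: restrictList E l else restrictList E l

/-- `gammaSet E evec` is the set of action sequences whose restriction to `E` is `evec`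
and whose last element is the last element of `evec` (with `gammaSet E [] = {[]}`). -/
def gammaSet {A : Type*} (E : Set A) (evec : List A) : Set (List A) :=
  {avec | (evec = [] ∧ avec = []) ∨
    (evec ≠ [] ∧ restrictList E avec = evec ∧ avec.getLast? = evec.getLast?)}

/-- A probabilistic labeled transition system (data part): sets of data points,
queries, responses, and hidden outputs, together with a (deterministic) partial
transition function assigning to a state and an action a discrete distribution
over next states. -/
structure PLTS (S : Type*) (A : Type*) where
  dat : Set A
  qry : Set A
  resp : Set A
  hid : Set A
  trans : S → A → Option (S → ℝ)

namespace PLTS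

variable {S : Type*} {A : Type*}

def inp (L : PLTS S A) : Set A := L.dat ∪ L.qry
def out (L : PLTS S A) : Set A := L.resp ∪ L.hid
def obs (L : PLTS S A) : Set A := L.qry ∪ L.resp

/-- Well-formedness of a PLTS: the action sets are pairwise suitably disjoint,
every transition target is a discrete probability distribution, output determinism,
quasi-input enabling, and transitions only occur on actions of the system. -/
def WF (L : PLTS S A) : Prop :=
  Disjoint L.dat L.qry ∧ Disjoint L.resp L.hid ∧ Disjoint L.inp L.out ∧
  (∀ s a μ, L.trans s a = some μ → (∀ s', 0 ≤ μ s') ∧ (∑' s', μ s') = 1) ∧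
  (∀ s a o μ μ', o ∈ L.out → L.trans s o = some μ → L.trans s a = some μ' → a = o) ∧
  (∀ s i₁ i₂ μ₁, i₁ ∈ L.inp → i₂ ∈ L.inp → L.trans s i₁ = some μ₁ → ∃ μ₂, L.trans s i₂ = some μ₂) ∧
  (∀ s a μ, L.trans s a = some μ → a ∈ L.inp ∪ L.out)

/-- The trace probability `⟨L,s⟩(i⃗)(a⃗,s')`: probability that, with available inputs
`ivec`, the automaton started at `s` produces the action sequence `avec` and is in
state `s'` after the last action.  (First argument is the action sequence.) -/
noncomputable def traceProb (L : PLTS S A) : List A → S → List A → S → ℝ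
  | [], s, _, s' => if s' = s then 1 else 0
  | a :: avec, s, ivec, s' =>
    if a ∈ L.inp then
      match ivec with
      | [] => 0
      | i :: ivec' =>
        if i = a then
          match L.trans s a with
          | some μ => ∑' s'' : S, μ s'' * L.traceProb avec s'' ivec' s'
          | none => 0
        else 0
    else
      match L.trans s a with
      | some μ => ∑' s'' : S, μ s'' * L.traceProb avec s'' ivec s'
      | none => 0

/-- `Pr[⟦⟨L,s⟩⟧(i⃗) ⊒ a⃗]`. -/
noncomputable def prefixProb (L : PLTS S A) (s : S) (ivec avec : List A) : ℝ :=
  ∑' s' : S, L.traceProb avec s ivec s'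

/-- `γ(e⃗)` for the observable actions of `L`. -/
def gamma (L : PLTS S A) (evec : List A) : Set (List A) :=
  gammaSet L.obs evec

/-- `Pr[⟦⟨L,s⟩⟧(i⃗)↾E ⊒ e⃗]`. -/
noncomputable def obsProb (L : PLTS S A) (s : S) (ivec evec : List A) : ℝ :=
  ∑' avec : L.gamma evec, L.prefixProb s ivec avec.1

/-- A state is `H`-disabled if it enables no hidden output. -/
def HDisabled (L : PLTS S A) (s : S) : Prop := ∀ h ∈ L.hid, L.trans s h = none

/-- Sequences of hidden actions. -/
def HSeq (L : PLTS S A) : Set (List A) := {l | ∀ x ∈ l, x ∈ L.hid}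

/-- The state part of the extended-transition distribution obtained from `μ`. -/
noncomputable def extDistState (L : PLTS S A) (μ : S → ℝ) (s' : S) : ℝ :=
  if L.HDisabled s' then ∑' s'' : S, μ s'' * ∑' hl : L.HSeq, L.traceProb hl.1 s'' [] s' else 0

/-- The extended-transition distribution over `S_⊥ = Option S` obtained from `μ`. -/
noncomputable def extDist (L : PLTS S A) (μ : S → ℝ) : Option S → ℝ
  | some s' => L.extDistState μ s'
  | none => 1 - ∑' s' : S, L.extDistState μ s'

/-- The extended transition `s ⇒^a ν`. -/
def ExtTrans (L : PLTS S A) (s : S) (a : A) (ν : Option S → ℝ) : Prop :=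
  ∃ μ, L.trans s a = some μ ∧ ν = L.extDist μ

/-- The extended transition from an element of `S_⊥` (⊥ has no transitions). -/
def ExtTransX (L : PLTS S A) (x : Option S) (a : A) (ν : Option S → ℝ) : Prop :=
  ∃ s, x = some s ∧ L.ExtTrans s a ν

/-- Observable prefix probability from an element of `S_⊥`. -/
noncomputable def obsProbX (L : PLTS S A) (x : Option S) (ivec evec : List A) : ℝ :=
  match x with
  | some s => L.obsProb s ivec evec
  | none => if evec = [] then 1 else 0

end PLTS

/-- The elements of `T` having no strict prefix in `T`. -/
def minimalPrefixes {X : Type*} (T : Set (List X)) : Set (List X) :=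
  {e | e ∈ T ∧ ¬ ∃ e' ∈ T, e' <+: e ∧ e' ≠ e}

namespace PLTS

variable {S : Type*} {A : Type*}

/-- `Pr[⟦M⟧(i⃗)↾E ⊒ T]` for a set `T` of observable sequences. -/
noncomputable def obsSetProb (L : PLTS S A) (s : S) (ivec : List A) (T : Set (List A)) : ℝ :=
  ∑' e : minimalPrefixes T, L.obsProb s ivec e.1

/-- `Δ(i⃗₁,i⃗₂) ≤ 1`: the two input sequences are equal or one is obtained from the
other by the insertion of a single data point. -/
def AdjOne (L : PLTS S A) (i₁ i₂ : List A) : Prop :=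
  i₁ = i₂ ∨ ∃ (pre post : List A) (d : A), d ∈ L.dat ∧
    ((i₁ = pre ++ d :: post ∧ i₂ = pre ++ post) ∨ (i₂ = pre ++ d :: post ∧ i₁ = pre ++ post))

/-- `Δ(i⃗₁,i⃗₂) ≤ n`. -/
def DeltaLe (L : PLTS S A) : ℕ → List A → List A → Prop
  | 0, i₁, i₂ => i₁ = i₂
  | n + 1, i₁, i₂ => i₁ = i₂ ∨ ∃ (pre post₁ post₂ : List A) (d : A), d ∈ L.dat ∧
      (((i₁ = pre ++ d :: post₁ ∧ i₂ = pre ++ post₂) ∨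
        (i₂ = pre ++ d :: post₂ ∧ i₁ = pre ++ post₁)) ∧ L.DeltaLe n post₁ post₂)

/-- `ε`-differential noninterference of the automaton `⟨L, s₀⟩`. -/
def DiffNI (L : PLTS S A) (s₀ : S) (ε : ℝ) : Prop :=
  ∀ i₁ i₂ : List A, (∀ a ∈ i₁, a ∈ L.inp) → (∀ a ∈ i₂, a ∈ L.inp) → L.AdjOne i₁ i₂ →
    ∀ T : Set (List A), (∀ e ∈ T, ∀ a ∈ e, a ∈ L.obs) →
      L.obsSetProb s₀ i₁ T ≤ Real.exp ε * L.obsSetProb s₀ i₂ T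

/-- A state is reachable from `s₀` if some trace reaches it with positive probability. -/
def Reachable (L : PLTS S A) (s₀ s : S) : Prop :=
  ∃ ivec avec, 0 < L.traceProb avec s₀ ivec s

/-- `HDisabled` extended to `S_⊥`. -/
def HDisabledX (L : PLTS S A) : Option S → Prop
  | some s => L.HDisabled s
  | none => True

end PLTS

/-- `δ`-approximate lifting of a relation `R` to distributions. -/
def ApproxLift {X : Type*} (R : X → X → Prop) (δ : ℝ) (ν₁ ν₂ : X → ℝ) : Prop :=
  ∃ β : {x : X // 0 < ν₁ x} → {x : X // 0 < ν₂ x}, Function.Bijective β ∧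
    ∀ x : {x : X // 0 < ν₁ x},
      R x.1 (β x).1 ∧ |Real.log (ν₁ x.1) - Real.log (ν₂ (β x).1)| ≤ δ

namespace PLTS

variable {S : Type*} {A : Type*}

/-- An `ε`-unwinding family for `L`: a family of relations over the `H`-disabled
states of `L` (extended to `S_⊥`), indexed by `[0,ε]`, satisfying the unwinding
conditions. -/
def IsUnwindingFamily (L : PLTS S A) (ε : ℝ) (R : ℝ → Option S → Option S → Prop) : Prop :=
  0 ≤ ε ∧
  (∀ ε', 0 ≤ ε' → ε' ≤ ε → ∀ x₁ x₂, R ε' x₁ x₂ → L.HDisabledX x₁ ∧ L.HDisabledX x₂) ∧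
  (∀ ε', 0 ≤ ε' → ε' ≤ ε → ∀ x₁ x₂, R ε' x₁ x₂ → ∀ a, a ∈ L.inp ∪ L.resp →
    (((∃ ν₁, L.ExtTransX x₁ a ν₁) ↔ (∃ ν₂, L.ExtTransX x₂ a ν₂)) ∧
     (∀ ν₁ ν₂, L.ExtTransX x₁ a ν₁ → L.ExtTransX x₂ a ν₂ →
       ∃ δ, 0 ≤ δ ∧ δ ≤ ε' ∧ ApproxLift (R (ε' - δ)) δ ν₁ ν₂)))

/-- The family `R` covers state `s` and data point `d`. -/
def Covers (L : PLTS S A) (ε : ℝ) (R : ℝ → Option S → Option S → Prop) (s : S) (d : A) : Prop :=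
  ∀ ν, L.ExtTrans s d ν → ν none = 0 ∧ ∀ s', 0 < ν (some s') → R ε (some s) (some s')

end PLTS

section Aux
open PLTS
variable {S : Type} {A : Type}

theorem traceProb_nil (L : PLTS S A) (s : S) (ivec : List A) (s' : S) :
    L.traceProb [] s ivec s' = if s' = s then 1 else 0 := rfl

theorem traceProb_cons_inp_nil (L : PLTS S A) {a : A} (h : a ∈ L.inp) (r : List A) (s s' : S) :
    L.traceProb (a :: r) s [] s' = 0 := by
  simp [PLTS.traceProb, h]

theorem traceProb_cons_inp (L : PLTS S A) {a : A} {μ : S → ℝ} (s s' : S) (h : a ∈ L.inp)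
    (ht : L.trans s a = some μ) (r iv : List A) :
    L.traceProb (a :: r) s (a :: iv) s' = ∑' s'', μ s'' * L.traceProb r s'' iv s' := by
  simp [PLTS.traceProb, h, ht]

theorem traceProb_cons_inp_ne (L : PLTS S A) {a i : A} (h : a ∈ L.inp) (hne : i ≠ a)
    (r iv : List A) (s s' : S) :
    L.traceProb (a :: r) s (i :: iv) s' = 0 := by
  simp [PLTS.traceProb, h, hne]

theorem traceProb_cons_inp_none (L : PLTS S A) {a : A} (s s' : S) (h : a ∈ L.inp)
    (ht : L.trans s a = none) (r iv : List A) :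
    L.traceProb (a :: r) s (a :: iv) s' = 0 := by
  simp [PLTS.traceProb, h, ht]

theorem traceProb_cons_out (L : PLTS S A) {a : A} {μ : S → ℝ} (s s' : S) (h : a ∉ L.inp)
    (ht : L.trans s a = some μ) (r iv : List A) :
    L.traceProb (a :: r) s iv s' = ∑' s'', μ s'' * L.traceProb r s'' iv s' := by
  simp [PLTS.traceProb, h, ht]

theorem traceProb_cons_out_none (L : PLTS S A) {a : A} (s s' : S) (h : a ∉ L.inp)
    (ht : L.trans s a = none) (r iv : List A) :
    L.traceProb (a :: r) s iv s' = 0 := by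
  simp [PLTS.traceProb, h, ht]

end Aux
section Aux2
open PLTS
variable {S : Type} {A : Type}

theorem summable_of_tsum_one {μ : S → ℝ} (h : ∑' s, μ s = 1) : Summable μ := by
  by_contra hn
  rw [tsum_eq_zero_of_not_summable hn] at h
  norm_num at h

theorem step_facts {μ : S → ℝ} (hμ0 : ∀ s, 0 ≤ μ s) (hμ1 : ∑' s, μ s = 1)
    {f : S → S → ℝ} (hf0 : ∀ s s', 0 ≤ f s s')
    (hfs : ∀ s, Summable (f s)) (hf1 : ∀ s, ∑' s', f s s' ≤ 1) :
    (∀ s', 0 ≤ ∑' s'', μ s'' * f s'' s') ∧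
    Summable (fun s' => ∑' s'', μ s'' * f s'' s') ∧
    (∑' s', ∑' s'', μ s'' * f s'' s') = ∑' s'', μ s'' * ∑' s', f s'' s' ∧
    (∑' s', ∑' s'', μ s'' * f s'' s') ≤ 1 := by
  have hμs : Summable μ := summable_of_tsum_one hμ1
  set g : S × S → ℝ := fun p => μ p.1 * f p.1 p.2 with hg
  have hg0 : 0 ≤ g := fun p => mul_nonneg (hμ0 _) (hf0 _ _)
  have hslice : ∀ x, Summable fun y => g (x, y) := fun x => (hfs x).mul_left (μ x)
  have hmarg : Summable fun x => ∑' y, g (x, y) := by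
    apply Summable.of_nonneg_of_le (fun x => tsum_nonneg fun y => hg0 (x, y)) _ hμs
    intro x
    have : ∑' y, g (x, y) = μ x * ∑' y, f x y := by
      simp only [hg]; exact tsum_mul_left
    rw [this]
    exact mul_le_of_le_one_right (hμ0 x) (hf1 x)
  have hG : Summable g := (summable_prod_of_nonneg hg0).2 ⟨hslice, hmarg⟩
  have hGs : Summable fun p : S × S => g p.swap := hG.prod_symm
  have hcol : Summable fun s' => ∑' s'', μ s'' * f s'' s' := by
    have := ((summable_prod_of_nonneg (fun p => hg0 p.swap)).1 hGs).2
    exact this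
  have hcomm : (∑' s', ∑' s'', μ s'' * f s'' s') = ∑' s'', ∑' s', μ s'' * f s'' s' :=
    Summable.tsum_comm' hG hslice (fun c => (summable_prod_of_nonneg (fun p => hg0 p.swap)).1 hGs |>.1 c)
  have heq : (∑' s', ∑' s'', μ s'' * f s'' s') = ∑' s'', μ s'' * ∑' s', f s'' s' := by
    rw [hcomm]
    exact tsum_congr fun s'' => tsum_mul_left
  refine ⟨fun s' => tsum_nonneg fun s'' => hg0 (s'', s'), hcol, heq, ?_⟩
  rw [heq]
  calc (∑' s'', μ s'' * ∑' s', f s'' s') ≤ ∑' s'', μ s'' := by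
        apply Summable.tsum_le_tsum _ _ hμs
        · exact fun s'' => mul_le_of_le_one_right (hμ0 s'') (hf1 s'')
        · rw [heq] at hcomm
          exact hmarg.congr fun x => by simp only [hg]; exact tsum_mul_left
    _ = 1 := hμ1

theorem tp_facts (L : PLTS S A) (hWF : L.WF) : ∀ (avec : List A) (s : S) (ivec : List A),
    (∀ s', 0 ≤ L.traceProb avec s ivec s') ∧
    Summable (fun s' => L.traceProb avec s ivec s') ∧
    (∑' s', L.traceProb avec s ivec s') ≤ 1 := by
  intro avec
  induction avec with
  | nil =>
    intro s ivec
    refine ⟨fun s' => ?_, ?_, ?_⟩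
    · rw [traceProb_nil]; positivity
    · apply summable_of_ne_finset_zero (s := {s})
      intro b hb
      rw [traceProb_nil, if_neg (by simpa using hb)]
    · have : ∀ s', L.traceProb [] s ivec s' = if s' = s then (1:ℝ) else 0 :=
        fun s' => traceProb_nil L s ivec s'
      rw [tsum_congr this, tsum_ite_eq]
  | cons a r ih =>
    intro s ivec
    have hzero : (∀ _ : S, (0:ℝ) ≤ 0) ∧ Summable (fun _ : S => (0:ℝ)) ∧ (∑' _ : S, (0:ℝ)) ≤ 1 := by
      refine ⟨fun _ => le_refl 0, summable_zero, by rw [tsum_zero]; norm_num⟩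
    by_cases hinp : a ∈ L.inp
    · match ivec with
      | [] => simpa [fun s' => traceProb_cons_inp_nil L hinp r s s'] using hzero
      | i :: iv =>
        by_cases hi : i = a
        · subst hi
          cases htr : L.trans s i with
          | none => simpa [fun s' => traceProb_cons_inp_none L s s' hinp htr r iv] using hzero
          | some μ =>
            have hμ := hWF.2.2.2.1 s i μ htr
            have := step_facts (hμ.1) (hμ.2)
              (f := fun s'' s' => L.traceProb r s'' iv s')
              (fun (s'' s' : S) => (ih s'' iv).1 s') (fun s'' => (ih s'' iv).2.1)
              (fun s'' => (ih s'' iv).2.2)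
            have hrw : ∀ s', L.traceProb (i :: r) s (i :: iv) s'
                = ∑' s'', μ s'' * L.traceProb r s'' iv s' :=
              fun s' => traceProb_cons_inp L s s' hinp htr r iv
            refine ⟨fun s' => by rw [hrw s']; exact this.1 s', ?_, ?_⟩
            · exact this.2.1.congr fun s' => (hrw s').symm
            · rw [tsum_congr hrw]; exact this.2.2.2
        · simpa [fun s' => traceProb_cons_inp_ne L hinp hi r iv s s'] using hzero
    · cases htr : L.trans s a with
      | none => simpa [fun s' => traceProb_cons_out_none L s s' hinp htr r ivec] using hzero
      | some μ =>
        have hμ := hWF.2.2.2.1 s a μ htr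
        have := step_facts (hμ.1) (hμ.2)
          (f := fun s'' s' => L.traceProb r s'' ivec s')
          (fun (s'' s' : S) => (ih s'' ivec).1 s') (fun s'' => (ih s'' ivec).2.1)
          (fun s'' => (ih s'' ivec).2.2)
        have hrw : ∀ s', L.traceProb (a :: r) s ivec s'
            = ∑' s'', μ s'' * L.traceProb r s'' ivec s' :=
          fun s' => traceProb_cons_out L s s' hinp htr r ivec
        refine ⟨fun s' => by rw [hrw s']; exact this.1 s', ?_, ?_⟩
        · exact this.2.1.congr fun s' => (hrw s').symm
        · rw [tsum_congr hrw]; exact this.2.2.2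

end Aux2
section Aux3
open PLTS
variable {S : Type} {A : Type}

theorem pp_nonneg (L : PLTS S A) (hWF : L.WF) (s : S) (ivec avec : List A) :
    0 ≤ L.prefixProb s ivec avec :=
  tsum_nonneg fun s' => (tp_facts L hWF avec s ivec).1 s'

theorem pp_le_one (L : PLTS S A) (hWF : L.WF) (s : S) (ivec avec : List A) :
    L.prefixProb s ivec avec ≤ 1 :=
  (tp_facts L hWF avec s ivec).2.2

theorem pp_nil (L : PLTS S A) (s : S) (ivec : List A) :
    L.prefixProb s ivec [] = 1 := by
  unfold PLTS.prefixProb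
  have : ∀ s', L.traceProb [] s ivec s' = if s' = s then (1:ℝ) else 0 :=
    fun s' => traceProb_nil L s ivec s'
  rw [tsum_congr this, tsum_ite_eq]

/-- Recursion for prefixProb when the head transition exists. -/
theorem pp_cons (L : PLTS S A) (hWF : L.WF) {a : A} {μ : S → ℝ} {s : S}
    {ivec ivec' : List A}
    (hbr : (a ∈ L.inp ∧ ivec = a :: ivec') ∨ (a ∉ L.inp ∧ ivec' = ivec))
    (htr : L.trans s a = some μ) (r : List A) :
    L.prefixProb s ivec (a :: r) = ∑' s'', μ s'' * L.prefixProb s'' ivec' r := by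
  have hμ := hWF.2.2.2.1 s a μ htr
  have hstep := step_facts (hμ.1) (hμ.2)
    (f := fun s'' s' => L.traceProb r s'' ivec' s')
    (fun (s'' s' : S) => (tp_facts L hWF r s'' ivec').1 s')
    (fun s'' => (tp_facts L hWF r s'' ivec').2.1)
    (fun s'' => (tp_facts L hWF r s'' ivec').2.2)
  have hrw : ∀ s', L.traceProb (a :: r) s ivec s'
      = ∑' s'', μ s'' * L.traceProb r s'' ivec' s' := by
    rcases hbr with ⟨h1, h2⟩ | ⟨h1, h2⟩
    · subst h2; exact fun s' => traceProb_cons_inp L s s' h1 htr r ivec'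
    · subst h2; exact fun s' => traceProb_cons_out L s s' h1 htr r _
  unfold PLTS.prefixProb
  rw [tsum_congr hrw, hstep.2.2.1]

/-- If the prefix probability of `a :: r` is nonzero, the head transition exists
and the input bookkeeping matches. -/
theorem pp_nz (L : PLTS S A) (hWF : L.WF) {a : A} {s : S} {ivec r : List A}
    (h : L.prefixProb s ivec (a :: r) ≠ 0) :
    ∃ μ ivec', L.trans s a = some μ ∧
      ((a ∈ L.inp ∧ ivec = a :: ivec') ∨ (a ∉ L.inp ∧ ivec' = ivec)) := by
  have hz : ∀ (g : S → ℝ), (∀ s', g s' = 0) → ∑' s', g s' = 0 := by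
    intro g hg; rw [tsum_congr hg, tsum_zero]
  by_cases hinp : a ∈ L.inp
  · cases ivec with
    | nil =>
      exact absurd (hz _ (fun s' => traceProb_cons_inp_nil L hinp r s s')) h
    | cons i iv =>
      by_cases hi : i = a
      · subst hi
        cases htr : L.trans s i with
        | none =>
          exact absurd (hz _ (fun s' => traceProb_cons_inp_none L s s' hinp htr r iv)) h
        | some μ => exact ⟨μ, iv, rfl, Or.inl ⟨hinp, rfl⟩⟩
      · exact absurd (hz _ (fun s' => traceProb_cons_inp_ne L hinp hi r iv s s')) h
  · cases htr : L.trans s a with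
    | none =>
      exact absurd (hz _ (fun s' => traceProb_cons_out_none L s s' hinp htr r ivec)) h
    | some μ => exact ⟨μ, ivec, rfl, Or.inr ⟨hinp, rfl⟩⟩

theorem pp_head_eq (L : PLTS S A) (hWF : L.WF) {a a' : A} {s : S} {ivec r r' : List A}
    (h1 : L.prefixProb s ivec (a :: r) ≠ 0) (h2 : L.prefixProb s ivec (a' :: r') ≠ 0) :
    a = a' := by
  obtain ⟨μ, iv1, htr1, hbr1⟩ := pp_nz L hWF h1
  obtain ⟨μ', iv2, htr2, hbr2⟩ := pp_nz L hWF h2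
  have hout : ∀ b : A, L.trans s b ≠ none → b ∉ L.inp → b ∈ L.out := by
    intro b hb hbi
    cases hbt : L.trans s b with
    | none => exact absurd hbt hb
    | some ν =>
      rcases hWF.2.2.2.2.2.2 s b ν hbt with h | h
      · exact absurd h hbi
      · exact h
  rcases hbr1 with ⟨hi1, he1⟩ | ⟨hi1, he1⟩
  · rcases hbr2 with ⟨hi2, he2⟩ | ⟨hi2, he2⟩
    · rw [he1] at he2; exact (List.cons_eq_cons.1 he2).1
    · have ha'out : a' ∈ L.out := hout a' (by rw [htr2]; simp) hi2
      exact (hWF.2.2.2.2.1 s a a' μ' μ ha'out htr2 htr1).symm ▸ rfl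
  · have haout : a ∈ L.out := hout a (by rw [htr1]; simp) hi1
    exact (hWF.2.2.2.2.1 s a' a μ μ' haout htr1 htr2).symm

end Aux3
section Aux4
open PLTS
variable {S : Type} {A : Type}

theorem sum_pp_le_one (L : PLTS S A) (hWF : L.WF) :
    ∀ (n : ℕ) (F : Finset (List A)), (∀ a ∈ F, a.length ≤ n) →
      (∀ a ∈ F, ∀ b ∈ F, a <+: b → a = b) →
      ∀ (s : S) (ivec : List A), (∑ a ∈ F, L.prefixProb s ivec a) ≤ 1 := by
  intro n
  induction n with
  | zero =>
    intro F hlen hpf s ivec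
    have hsub : F ⊆ {[]} := by
      intro a ha
      simp only [Finset.mem_singleton]
      exact List.length_eq_zero_iff.1 (Nat.le_zero.1 (hlen a ha))
    calc (∑ a ∈ F, L.prefixProb s ivec a) ≤ ∑ a ∈ ({[]} : Finset (List A)), L.prefixProb s ivec a :=
          Finset.sum_le_sum_of_subset_of_nonneg hsub (fun a _ _ => pp_nonneg L hWF s ivec a)
      _ = 1 := by rw [Finset.sum_singleton, pp_nil]
  | succ n ihn =>
    intro F hlen hpf s ivec
    classical
    by_cases hnil : [] ∈ F
    · have hF : F = {[]} := by
        apply Finset.eq_singleton_iff_unique_mem.2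
        exact ⟨hnil, fun b hb => (hpf [] hnil b hb List.nil_prefix).symm⟩
      rw [hF, Finset.sum_singleton, pp_nil]
    · set F' := F.filter (fun a => L.prefixProb s ivec a ≠ 0) with hF'
      have hsum : (∑ a ∈ F, L.prefixProb s ivec a) = ∑ a ∈ F', L.prefixProb s ivec a :=
        (Finset.sum_filter_ne_zero F).symm
      rw [hsum]
      rcases F'.eq_empty_or_nonempty with he | ⟨a₀, ha₀⟩
      · rw [he, Finset.sum_empty]; norm_num
      · have ha₀F : a₀ ∈ F := (Finset.mem_filter.1 ha₀).1
        have ha₀nz : L.prefixProb s ivec a₀ ≠ 0 := (Finset.mem_filter.1 ha₀).2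
        obtain ⟨h₀, t₀⟩ : ∃ h₀ t₀, a₀ = h₀ :: t₀ := by
          cases a₀ with
          | nil => exact absurd ha₀F hnil
          | cons x y => exact ⟨x, y, rfl⟩
        obtain ⟨t₀, rfl⟩ := t₀
        obtain ⟨μ, iv', htr, hbr⟩ := pp_nz L hWF ha₀nz
        have hμ := hWF.2.2.2.1 s h₀ μ htr
        have hμs : Summable μ := summable_of_tsum_one hμ.2
        -- every element of F' is h₀ :: something
        have hhead : ∀ b ∈ F', ∃ t, b = h₀ :: t := by
          intro b hb
          have hbnz : L.prefixProb s ivec b ≠ 0 := (Finset.mem_filter.1 hb).2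
          cases b with
          | nil => exact absurd (Finset.mem_filter.1 hb).1 hnil
          | cons x y => exact ⟨y, by rw [pp_head_eq L hWF hbnz ha₀nz]⟩
        -- rewrite each term
        have hterm : ∀ b ∈ F', L.prefixProb s ivec b
            = ∑' s'', μ s'' * L.prefixProb s'' iv' b.tail := by
          intro b hb
          obtain ⟨t, rfl⟩ := hhead b hb
          rw [List.tail_cons]
          exact pp_cons L hWF hbr htr t
        rw [Finset.sum_congr rfl hterm]
        -- swap finite sum and tsum
        have hsummand : ∀ b ∈ F', Summable (fun s'' => μ s'' * L.prefixProb s'' iv' b.tail) := by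
          intro b _
          apply Summable.of_nonneg_of_le _ _ hμs
          · exact fun s'' => mul_nonneg (hμ.1 s'') (pp_nonneg L hWF s'' iv' b.tail)
          · exact fun s'' => mul_le_of_le_one_right (hμ.1 s'') (pp_le_one L hWF s'' iv' b.tail)
        rw [← Summable.tsum_finsetSum hsummand]
        have hG : ∀ s'' : S, (∑ b ∈ F', L.prefixProb s'' iv' b.tail) ≤ 1 := by
          intro s''
          have hinj : ∀ b₁ ∈ F', ∀ b₂ ∈ F', b₁.tail = b₂.tail → b₁ = b₂ := by
            intro b₁ hb₁ b₂ hb₂ ht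
            obtain ⟨t₁, rfl⟩ := hhead b₁ hb₁
            obtain ⟨t₂, rfl⟩ := hhead b₂ hb₂
            simpa using ht
          rw [← Finset.sum_image hinj]
          apply ihn
          · intro t ht
            obtain ⟨b, hb, rfl⟩ := Finset.mem_image.1 ht
            obtain ⟨t', rfl⟩ := hhead b hb
            have := hlen _ (Finset.mem_filter.1 hb).1
            simp only [List.length_cons, List.tail_cons] at this ⊢
            omega
          · intro t₁ ht₁ t₂ ht₂ hpre
            obtain ⟨b₁, hb₁, rfl⟩ := Finset.mem_image.1 ht₁
            obtain ⟨b₂, hb₂, rfl⟩ := Finset.mem_image.1 ht₂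
            obtain ⟨u₁, rfl⟩ := hhead b₁ hb₁
            obtain ⟨u₂, rfl⟩ := hhead b₂ hb₂
            have : (h₀ :: u₁) = (h₀ :: u₂) := by
              apply hpf _ (Finset.mem_filter.1 hb₁).1 _ (Finset.mem_filter.1 hb₂).1
              simpa [List.cons_prefix_cons] using hpre
            simpa using this
        calc (∑' s'', ∑ b ∈ F', μ s'' * L.prefixProb s'' iv' b.tail)
            = ∑' s'', μ s'' * ∑ b ∈ F', L.prefixProb s'' iv' b.tail := by
              apply tsum_congr; intro s''; rw [Finset.mul_sum]
          _ ≤ ∑' s'', μ s'' := by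
              apply Summable.tsum_le_tsum _ _ hμs
              · intro s''
                apply mul_le_of_le_one_right (hμ.1 s'') (hG s'')
              · apply Summable.of_nonneg_of_le _ _ hμs
                · intro s''
                  exact mul_nonneg (hμ.1 s'')
                    (Finset.sum_nonneg fun b _ => pp_nonneg L hWF s'' iv' b.tail)
                · exact fun s'' => mul_le_of_le_one_right (hμ.1 s'') (hG s'')
          _ = 1 := hμ.2

end Aux4
section Aux5
open PLTS
variable {S : Type} {A : Type}

theorem restrictList_append (E : Set A) (l₁ l₂ : List A) :
    restrictList E (l₁ ++ l₂) = restrictList E l₁ ++ restrictList E l₂ := by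
  induction l₁ with
  | nil => simp [restrictList]
  | cons a l ih => by_cases h : a ∈ E <;> simp [restrictList, h, ih]

theorem mem_of_mem_restrictList {E : Set A} {x : A} : ∀ {l : List A},
    x ∈ restrictList E l → x ∈ E := by
  intro l
  induction l with
  | nil => simp [restrictList]
  | cons a l ih =>
    by_cases h : a ∈ E
    · simp only [restrictList, if_pos h, List.mem_cons]
      rintro (rfl | hx)
      · exact h
      · exact ih hx
    · simp only [restrictList, if_neg h]
      exact ih

theorem notMem_of_restrictList_nil {E : Set A} : ∀ {l : List A},
    restrictList E l = [] → ∀ y ∈ l, y ∉ E := by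
  intro l
  induction l with
  | nil => simp
  | cons a l ih =>
    by_cases h : a ∈ E
    · simp [restrictList, if_pos h]
    · simp only [restrictList, if_neg h, List.mem_cons]
      rintro hl y (rfl | hy)
      · exact h
      · exact ih hl y hy

theorem mem_of_getLast?_eq {l : List A} {y : A} (h : l.getLast? = some y) : y ∈ l := by
  obtain ⟨hne, rfl⟩ := List.mem_getLast?_eq_getLast (Option.mem_def.2 h)
  exact List.getLast_mem hne

theorem gamma_disjoint (E : Set A) {e₁ e₂ a : List A}
    (h₁ : a ∈ gammaSet E e₁) (h₂ : a ∈ gammaSet E e₂) : e₁ = e₂ := by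
  rcases h₁ with ⟨rfl, rfl⟩ | ⟨hne₁, hr₁, _⟩
  · rcases h₂ with ⟨rfl, _⟩ | ⟨hne₂, hr₂, _⟩
    · rfl
    · exact (hne₂ (by simpa [restrictList] using hr₂.symm)).elim
  · rcases h₂ with ⟨rfl, rfl⟩ | ⟨hne₂, hr₂, _⟩
    · exact (hne₁ (by simpa [restrictList] using hr₁.symm)).elim
    · rw [← hr₁, ← hr₂]

theorem gamma_prefix (E : Set A) {e₁ e₂ a₁ a₂ : List A}
    (h : e₁ <+: e₂ → e₁ = e₂)
    (h₁ : a₁ ∈ gammaSet E e₁) (h₂ : a₂ ∈ gammaSet E e₂) (hp : a₁ <+: a₂) : a₁ = a₂ := by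
  rcases h₁ with ⟨rfl, rfl⟩ | ⟨hne₁, hr₁, hl₁⟩
  · have he₂ : e₂ = [] := (h (List.nil_prefix)).symm
    rcases h₂ with ⟨_, rfl⟩ | ⟨hne₂, _, _⟩
    · rfl
    · exact (hne₂ he₂).elim
  · rcases h₂ with ⟨rfl, rfl⟩ | ⟨hne₂, hr₂, hl₂⟩
    · have : a₁ = [] := List.prefix_nil.1 hp
      subst this
      exact (hne₁ (by simpa [restrictList] using hr₁.symm)).elim
    · obtain ⟨t, rfl⟩ := hp
      rw [restrictList_append, hr₁] at hr₂
      have hpre : e₁ <+: e₂ := ⟨restrictList E t, hr₂⟩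
      have he : e₁ = e₂ := h hpre
      subst he
      have hrt : restrictList E t = [] := by
        have := congrArg List.length hr₂
        simp only [List.length_append] at this
        exact List.length_eq_zero_iff.1 (by omega)
      cases t with
      | nil => simp
      | cons x ts =>
        exfalso
        have htne : (x :: ts : List A) ≠ [] := by simp
        have hlast : (a₁ ++ (x :: ts)).getLast? = (x :: ts).getLast? :=
          List.getLast?_append_of_ne_nil a₁ htne
        rw [hl₂] at hlast
        obtain ⟨y, hy⟩ : ∃ y, e₁.getLast? = some y := by
          cases hge : e₁.getLast? with
          | none => exact absurd (List.getLast?_eq_none_iff.1 hge) hne₁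
          | some y => exact ⟨y, rfl⟩
        have hyE : y ∈ E := by
          have hymem : y ∈ e₁ := mem_of_getLast?_eq hy
          rw [← hr₁] at hymem
          exact mem_of_mem_restrictList hymem
        have hyt : y ∈ x :: ts := mem_of_getLast?_eq (by rw [← hlast, hy])
        exact notMem_of_restrictList_nil hrt y hyt hyE

end Aux5
section Aux6
open PLTS
variable {S : Type} {A : Type}

theorem pf_subset_facts (L : PLTS S A) (hWF : L.WF) (s : S) (ivec : List A)
    (U : Set (List A)) (hU : ∀ a₁ ∈ U, ∀ a₂ ∈ U, a₁ <+: a₂ → a₁ = a₂) :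
    Summable (fun a : U => L.prefixProb s ivec a.1) ∧
      (∑' a : U, L.prefixProb s ivec a.1) ≤ 1 := by
  classical
  have hbd : ∀ u : Finset U, (∑ a ∈ u, L.prefixProb s ivec a.1) ≤ 1 := by
    intro u
    have hinj : ∀ x ∈ u, ∀ y ∈ u, (x : List A) = (y : List A) → x = y :=
      fun x _ y _ h => Subtype.ext h
    rw [← Finset.sum_image hinj]
    set v := u.image (fun x : U => (x : List A)) with hv
    apply sum_pp_le_one L hWF (v.sup List.length) v
    · exact fun a ha => Finset.le_sup (f := List.length) ha
    · intro a ha b hb hab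
      obtain ⟨x, _, rfl⟩ := Finset.mem_image.1 ha
      obtain ⟨y, _, rfl⟩ := Finset.mem_image.1 hb
      exact hU _ x.2 _ y.2 hab
  have hsummable : Summable (fun a : U => L.prefixProb s ivec a.1) :=
    summable_of_sum_le (fun a => pp_nonneg L hWF s ivec a.1) hbd
  exact ⟨hsummable, Summable.tsum_le_of_sum_le hsummable hbd⟩

theorem gamma_pf (L : PLTS S A) (e : List A) :
    ∀ a₁ ∈ L.gamma e, ∀ a₂ ∈ L.gamma e, a₁ <+: a₂ → a₁ = a₂ :=
  fun _ h₁ _ h₂ hp => gamma_prefix L.obs (fun _ => rfl) h₁ h₂ hp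

theorem summable_pp_gamma (L : PLTS S A) (hWF : L.WF) (s : S) (ivec e : List A) :
    Summable (fun a : L.gamma e => L.prefixProb s ivec a.1) :=
  (pf_subset_facts L hWF s ivec (L.gamma e) (gamma_pf L e)).1

theorem obsProb_nonneg (L : PLTS S A) (hWF : L.WF) (s : S) (ivec e : List A) :
    0 ≤ L.obsProb s ivec e :=
  tsum_nonneg fun a => pp_nonneg L hWF s ivec a.1

theorem sum_obsProb_le_one (L : PLTS S A) (hWF : L.WF) (s : S) (ivec : List A)
    (G : Finset (List A)) (hpf : ∀ e₁ ∈ G, ∀ e₂ ∈ G, e₁ <+: e₂ → e₁ = e₂) :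
    (∑ e ∈ G, L.obsProb s ivec e) ≤ 1 := by
  classical
  have hsub : ∀ e : List A, Summable (Set.indicator (L.gamma e) (L.prefixProb s ivec)) :=
    fun e => summable_subtype_iff_indicator.1 (summable_pp_gamma L hWF s ivec e)
  have hobs_eq : ∀ e, L.obsProb s ivec e
      = ∑' a, Set.indicator (L.gamma e) (L.prefixProb s ivec) a :=
    fun e => tsum_subtype _ _
  rw [Finset.sum_congr rfl (fun e _ => hobs_eq e), ← Summable.tsum_finsetSum (fun e _ => hsub e)]
  set U : Set (List A) := {a | ∃ e ∈ G, a ∈ L.gamma e} with hUdef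
  have hUpf : ∀ a₁ ∈ U, ∀ a₂ ∈ U, a₁ <+: a₂ → a₁ = a₂ := by
    rintro a₁ ⟨e₁, he₁, hae₁⟩ a₂ ⟨e₂, he₂, hae₂⟩ hp
    exact gamma_prefix L.obs (hpf e₁ he₁ e₂ he₂) hae₁ hae₂ hp
  have hpt : ∀ a, (∑ e ∈ G, Set.indicator (L.gamma e) (L.prefixProb s ivec) a)
      = Set.indicator U (L.prefixProb s ivec) a := by
    intro a
    by_cases hex : a ∈ U
    · obtain ⟨e₀, he₀, hae₀⟩ := hex
      rw [Finset.sum_eq_single e₀]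
      · rw [Set.indicator_of_mem hae₀]
        exact (Set.indicator_of_mem (show a ∈ U from ⟨e₀, he₀, hae₀⟩) _).symm
      · intro e he hne
        exact Set.indicator_of_notMem (fun hae => hne (gamma_disjoint L.obs hae hae₀)) _
      · intro h; exact absurd he₀ h
    · rw [Set.indicator_of_notMem hex]
      exact Finset.sum_eq_zero fun e he =>
        Set.indicator_of_notMem (fun hae => hex ⟨e, he, hae⟩) _
  rw [tsum_congr hpt, ← tsum_subtype U (L.prefixProb s ivec)]
  exact (pf_subset_facts L hWF s ivec U hUpf).2

theorem summable_obsProb (L : PLTS S A) (hWF : L.WF) (s : S) (ivec : List A)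
    (T₀ : Set (List A)) (hpf : ∀ e₁ ∈ T₀, ∀ e₂ ∈ T₀, e₁ <+: e₂ → e₁ = e₂) :
    Summable (fun e : T₀ => L.obsProb s ivec e.1) := by
  classical
  have h0 : (0 : ↥T₀ → ℝ) ≤ fun e : T₀ => L.obsProb s ivec e.1 :=
    fun e => obsProb_nonneg L hWF s ivec e.1
  have hb : ∀ u : Finset ↥T₀, (∑ e ∈ u, L.obsProb s ivec e.1) ≤ 1 := by
    intro u
    have hinj : ∀ x ∈ u, ∀ y ∈ u, (x : List A) = (y : List A) → x = y :=
      fun x _ y _ h => Subtype.ext h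
    rw [← Finset.sum_image hinj]
    apply sum_obsProb_le_one L hWF s ivec
    intro e₁ h₁ e₂ h₂ hp
    obtain ⟨x, _, rfl⟩ := Finset.mem_image.1 h₁
    obtain ⟨y, _, rfl⟩ := Finset.mem_image.1 h₂
    exact hpf _ x.2 _ y.2 hp
  exact summable_of_sum_le h0 hb

theorem minimalPrefixes_singleton (evec : List A) :
    minimalPrefixes ({evec} : Set (List A)) = {evec} := by
  ext e
  simp only [minimalPrefixes, Set.mem_setOf_eq, Set.mem_singleton_iff]
  constructor
  · rintro ⟨rfl, _⟩; rfl
  · rintro rfl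
    exact ⟨rfl, fun ⟨e', he', _, hne⟩ => hne he'⟩

theorem minimalPrefixes_pf (T : Set (List A)) :
    ∀ e₁ ∈ minimalPrefixes T, ∀ e₂ ∈ minimalPrefixes T, e₁ <+: e₂ → e₁ = e₂ := by
  rintro e₁ ⟨he₁, _⟩ e₂ ⟨_, hmin₂⟩ hp
  by_contra hne
  exact hmin₂ ⟨e₁, he₁, hp, hne⟩

end Aux6
section Aux7
open PLTS
variable {S : Type} {A : Type}

theorem obsSetProb_singleton (L : PLTS S A) (s : S) (ivec evec : List A) :
    L.obsSetProb s ivec {evec} = L.obsProb s ivec evec := by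
  unfold PLTS.obsSetProb
  rw [minimalPrefixes_singleton]
  exact tsum_singleton evec (L.obsProb s ivec)

end Aux7
section Statements

open PLTS

variable {S : Type} {A : Type}

theorem stmt7 [Countable S] [Countable A] (L : PLTS S A) (hWF : L.WF) (s₀ : S) (ε : ℝ) :
    L.DiffNI s₀ ε ↔
      ∀ i₁ i₂ : List A, (∀ a ∈ i₁, a ∈ L.inp) → (∀ a ∈ i₂, a ∈ L.inp) → L.AdjOne i₁ i₂ →
        ∀ evec : List A, (∀ a ∈ evec, a ∈ L.obs) →
          L.obsProb s₀ i₁ evec ≤ Real.exp ε * L.obsProb s₀ i₂ evec := by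
  constructor
  · intro h i₁ i₂ h1 h2 hadj evec hobs
    have hT : ∀ e ∈ ({evec} : Set (List A)), ∀ a ∈ e, a ∈ L.obs := by
      intro e he
      rw [Set.mem_singleton_iff] at he
      subst he
      exact hobs
    have := h i₁ i₂ h1 h2 hadj {evec} hT
    rwa [obsSetProb_singleton, obsSetProb_singleton] at this
  · intro h i₁ i₂ h1 h2 hadj T hT
    unfold PLTS.obsSetProb
    have hpf := minimalPrefixes_pf T
    have hsub : minimalPrefixes T ⊆ T := fun e he => he.1
    calc (∑' e : minimalPrefixes T, L.obsProb s₀ i₁ e.1)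
        ≤ ∑' e : minimalPrefixes T, Real.exp ε * L.obsProb s₀ i₂ e.1 := by
          apply Summable.tsum_le_tsum
          · intro e
            exact h i₁ i₂ h1 h2 hadj e.1 (hT e.1 (hsub e.2))
          · exact summable_obsProb L hWF s₀ i₁ _ hpf
          · exact (summable_obsProb L hWF s₀ i₂ _ hpf).mul_left _
      _ = Real.exp ε * ∑' e : minimalPrefixes T, L.obsProb s₀ i₂ e.1 := tsum_mul_left

end Statements
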